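/- The set of points (r_a, r_b, r_c) in ℝ^3 satisfying the seven inequalities r_a ≥ 0, r_b ≥ 0, r_c ≥ 0, r_a ≤ 1, r_c ≤ 1, r_b + r_c ≤ 2, and r_a + r_b ≤ 2 is equal to the convex hull in ℝ^3 of the 8 points (0,0,0), (0,0,1), (1,0,0), (0,2,0), (0,1,1), (1,0,1), (1,1,0), (1,1,1). -/

import Mathlib

open Matrix

set_option maxHeartbeats 1000000 in
theorem fano_rate_region :
    {r : Fin 3 → ℝ | 0 ≤ r 0 ∧ 0 ≤ r 1 ∧ 0 ≤ r 2 ∧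
      r 0 ≤ 1 ∧ r 2 ≤ 1 ∧ r 1 + r 2 ≤ 2 ∧ r 0 + r 1 ≤ 2} =
    convexHull ℝ {![0,0,0], ![0,0,1], ![1,0,0], ![0,2,0],
      ![0,1,1], ![1,0,1], ![1,1,0], ![1,1,1]} := by
  have hz : ∀ i ∈ (Finset.univ : Finset (Fin 8)),
      (![![0,0,0], ![0,0,1], ![1,0,0], ![0,2,0], ![0,1,1], ![1,0,1], ![1,1,0], ![1,1,1]] :
        Fin 8 → Fin 3 → ℝ) i ∈
      ({![0,0,0], ![0,0,1], ![1,0,0], ![0,2,0], ![0,1,1], ![1,0,1], ![1,1,0], ![1,1,1]} :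
        Set (Fin 3 → ℝ)) := by
    intro i _
    fin_cases i <;> norm_num [Set.mem_insert_iff]
  apply Set.Subset.antisymm
  · intro r hr
    obtain ⟨h0, h1, h2, h3, h4, h5, h6⟩ := hr
    have hreq : r = ![r 0, r 1, r 2] := by
      funext j; fin_cases j <;> rfl
    have key : ∀ w : Fin 8 → ℝ, (∀ i ∈ (Finset.univ : Finset (Fin 8)), 0 ≤ w i) →
        (∑ i, w i) = 1 →
        r = ∑ i, w i • (![![0,0,0], ![0,0,1], ![1,0,0], ![0,2,0], ![0,1,1], ![1,0,1],
          ![1,1,0], ![1,1,1]] : Fin 8 → Fin 3 → ℝ) i →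
        r ∈ convexHull ℝ ({![0,0,0], ![0,0,1], ![1,0,0], ![0,2,0], ![0,1,1], ![1,0,1],
          ![1,1,0], ![1,1,1]} : Set (Fin 3 → ℝ)) := by
      intro w hw hsum heq
      have := Finset.centerMass_mem_convexHull (Finset.univ) hw (by rw [hsum]; norm_num) hz
      rwa [Finset.centerMass_eq_of_sum_1 _ _ hsum, ← heq] at this
    rcases le_or_gt (r 1) 1 with hb | hb
    · apply key ![(1-r 0)*(1-r 1)*(1-r 2) + (1-r 0)*(r 1)*(1-r 2)/2, (1-r 0)*(1-r 1)*(r 2),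
        (r 0)*(1-r 1)*(1-r 2), (1-r 0)*(r 1)*(1-r 2)/2, (1-r 0)*(r 1)*(r 2),
        (r 0)*(1-r 1)*(r 2), (r 0)*(r 1)*(1-r 2), (r 0)*(r 1)*(r 2)]
      · intro i _
        have ha' : (0:ℝ) ≤ 1 - r 0 := by linarith
        have hb' : (0:ℝ) ≤ 1 - r 1 := by linarith
        have hc' : (0:ℝ) ≤ 1 - r 2 := by linarith
        fin_cases i <;> norm_num <;>
          linarith [mul_nonneg (mul_nonneg ha' hb') hc', mul_nonneg (mul_nonneg ha' hb') h2,
            mul_nonneg (mul_nonneg h0 hb') hc', mul_nonneg (mul_nonneg ha' h1) hc',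
            mul_nonneg (mul_nonneg ha' h1) h2, mul_nonneg (mul_nonneg h0 hb') h2,
            mul_nonneg (mul_nonneg h0 h1) hc', mul_nonneg (mul_nonneg h0 h1) h2]
      · norm_num [Fin.sum_univ_succ]; ring
      · conv_lhs => rw [hreq]
        funext j
        fin_cases j <;> norm_num [Fin.sum_univ_succ] <;> ring
    · have hb2 : r 1 ≤ 2 := by linarith
      rcases eq_or_lt_of_le hb2 with hb2 | hb2
      · have ha0 : r 0 = 0 := by linarith
        have hc0 : r 2 = 0 := by linarith
        have hr3 : r = ![0,2,0] := by
          rw [hreq, ha0, hc0, hb2]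
        rw [hr3]
        exact subset_convexHull ℝ _ (by norm_num [Set.mem_insert_iff])
      · obtain ⟨t, ht⟩ : ∃ t : ℝ, t = 2 - r 1 := ⟨_, rfl⟩
        have ht0 : 0 < t := by rw [ht]; linarith
        have hat : r 0 ≤ t := by rw [ht]; linarith
        have hct : r 2 ≤ t := by rw [ht]; linarith
        have ht1 : t ≤ 1 := by rw [ht]; linarith
        have h1' : (0:ℝ) ≤ t - r 0 := by linarith
        have h2' : (0:ℝ) ≤ t - r 2 := by linarith
        have h3' : (0:ℝ) ≤ 1 - t := by linarith
        have ht0' : (t:ℝ) ≠ 0 := ne_of_gt ht0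
        apply key ![(t-r 0)*(t-r 2)/(2*t), 0, 0, (1-t) + (t-r 0)*(t-r 2)/(2*t),
          (t-r 0)*(r 2)/t, 0, (r 0)*(t-r 2)/t, (r 0)*(r 2)/t]
        · intro i _
          fin_cases i <;> norm_num <;>
            linarith [div_nonneg (mul_nonneg h1' h2') (by linarith : (0:ℝ) ≤ 2*t),
              div_nonneg (mul_nonneg h1' h2) ht0.le, div_nonneg (mul_nonneg h0 h2') ht0.le,
              div_nonneg (mul_nonneg h0 h2) ht0.le]
        · subst ht
          norm_num [Fin.sum_univ_succ]
          field_simp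
          ring
        · conv_lhs => rw [hreq]
          subst ht
          funext j
          fin_cases j <;> norm_num [Fin.sum_univ_succ] <;> field_simp <;> ring
  · apply convexHull_min
    · intro x hx
      simp only [Set.mem_insert_iff, Set.mem_singleton_iff] at hx
      rcases hx with h|h|h|h|h|h|h|h <;> subst h <;>
        exact ⟨by norm_num [Matrix.cons_val_two], by norm_num [Matrix.cons_val_two], by norm_num [Matrix.cons_val_two], by norm_num [Matrix.cons_val_two], by norm_num [Matrix.cons_val_two], by norm_num [Matrix.cons_val_two],
          by norm_num [Matrix.cons_val_two]⟩
    · intro x hx y hy s u hs hu hsu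
      obtain ⟨x0, x1, x2, x3, x4, x5, x6⟩ := hx
      obtain ⟨y0, y1, y2, y3, y4, y5, y6⟩ := hy
      refine ⟨?_, ?_, ?_, ?_, ?_, ?_, ?_⟩ <;> simp only [Pi.add_apply, Pi.smul_apply,
        smul_eq_mul] <;> nlinarith
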